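/- Let p be a prime and n ≥ p an integer with p-adic expansion n = α_r p^r + ... + α_0 where r ≥ 1, α_r ≥ 1, 0 ≤ α_i ≤ p-1, and α_{r-1} < p-1. Then the p-adic valuation of the binomial coefficient C(n, p^{r-1}(p-1)) equals 1. -/

import Mathlib

private lemma digitsum_single (p d : ℕ) (hp : 1 < p) (hd : d < p) :
    (p.digits d).sum = d := by
  rcases Nat.eq_zero_or_pos d with rfl | hd0
  · simp
  · rw [Nat.digits_def' hp hd0, Nat.mod_eq_of_lt hd, Nat.div_eq_of_lt hd]
    simp

private lemma digitsum_split (p x y t : ℕ) (hp : 1 < p) (hx : x < p ^ t) :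
    (p.digits (x + p ^ t * y)).sum = (p.digits x).sum + (p.digits y).sum := by
  rcases Nat.eq_zero_or_pos y with rfl | hy
  · simp
  · have hlen : (p.digits x).length ≤ t := by
      rcases Nat.eq_zero_or_pos x with rfl | hx0
      · simp
      · rw [Nat.digits_len p x hp (by omega)]
        have := (Nat.log_lt_iff_lt_pow hp (by omega)).mpr hx
        omega
    obtain ⟨k, hk⟩ := Nat.le.dest hlen
    rw [← hk, ← Nat.digits_append_zeroes_append_digits hp hy]
    simp

private lemma sum_digits_lt (p t : ℕ) (hp : 1 < p) (α : ℕ → ℕ) (hdig : ∀ i, α i ≤ p - 1) :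
    ∑ i ∈ Finset.range t, α i * p ^ i < p ^ t := by
  induction t with
  | zero => simp
  | succ t ih =>
    rw [Finset.sum_range_succ, pow_succ]
    have h1 : α t * p ^ t ≤ (p - 1) * p ^ t :=
      Nat.mul_le_mul_right _ (hdig t)
    have hpt : 0 < p ^ t := pow_pos (by omega : 0 < p) t
    calc ∑ i ∈ Finset.range t, α i * p ^ i + α t * p ^ t
        < p ^ t + (p - 1) * p ^ t := by omega
      _ = p ^ t * p := by
          obtain ⟨c, rfl⟩ : ∃ c, p = c + 2 := ⟨p - 2, by omega⟩
          simp [Nat.add_sub_cancel]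
          ring

theorem stmt_0 (p n r : ℕ) (α : ℕ → ℕ) (hp : p.Prime) (hnp : p ≤ n) (hr : 1 ≤ r)
    (hn : n = ∑ i ∈ Finset.range (r + 1), α i * p ^ i)
    (hdig : ∀ i, α i ≤ p - 1) (htop : 1 ≤ α r) (hsub : α (r - 1) < p - 1) :
    padicValNat p (n.choose (p ^ (r - 1) * (p - 1))) = 1 := by
  haveI : Fact p.Prime := ⟨hp⟩
  have hp1 : 1 < p := hp.one_lt
  obtain ⟨r', rfl⟩ : ∃ r', r = r' + 1 := ⟨r - 1, by omega⟩
  simp only [Nat.add_sub_cancel] at hsub ⊢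
  set lo : ℕ := ∑ i ∈ Finset.range r', α i * p ^ i with hlo
  set a : ℕ := α r' with ha
  set A : ℕ := α (r' + 1) with hA
  clear_value lo a A
  have hloLt : lo < p ^ r' := hlo ▸ sum_digits_lt p r' hp1 α hdig
  have hnEq : n = lo + p ^ r' * (a + p * A) := by
    rw [hn, Finset.sum_range_succ, Finset.sum_range_succ, hlo, ha, hA]
    ring
  have haLt : a < p - 1 := hsub
  have hALt : A ≤ p - 1 := by rw [hA]; exact hdig _
  have hA1 : 1 ≤ A := htop
  set k : ℕ := p ^ r' * (p - 1) with hk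
  have hkn : k ≤ n := by
    have : p - 1 ≤ a + p * A := by
      calc p - 1 ≤ p := by omega
        _ = p * 1 := by ring
        _ ≤ p * A := Nat.mul_le_mul_left _ hA1
        _ ≤ a + p * A := by omega
    calc k ≤ p ^ r' * (a + p * A) := Nat.mul_le_mul_left _ this
      _ ≤ n := by omega
  have hnk : n - k = lo + p ^ r' * (a + 1 + p * (A - 1)) := by
    have : n = lo + p ^ r' * (a + 1 + p * (A - 1)) + k := by
      rw [hnEq, hk]
      obtain ⟨A', rfl⟩ : ∃ A', A = A' + 1 := ⟨A - 1, by omega⟩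
      obtain ⟨q, rfl⟩ : ∃ q, p = q + 2 := ⟨p - 2, by omega⟩
      have h21 : q + 2 - 1 = q + 1 := by omega
      rw [h21, Nat.add_sub_cancel]
      ring
    omega
  -- digit sums
  have hsk : (p.digits k).sum = p - 1 := by
    have := digitsum_split p 0 (p - 1) r' hp1 (pow_pos (by omega : 0 < p) r')
    simpa [digitsum_single p (p - 1) hp1 (by omega)] using this
  have hdigit2 : ∀ u v : ℕ, u < p → v < p → (p.digits (u + p * v)).sum = u + v := by
    intro u v hu hv
    have := digitsum_split p u v 1 hp1 (by simpa using hu)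
    simpa [digitsum_single p u hp1 hu, digitsum_single p v hp1 hv] using this
  have hsn : (p.digits n).sum = (p.digits lo).sum + (a + A) := by
    rw [hnEq, digitsum_split p lo _ r' hp1 hloLt, hdigit2 a A (by omega) (by omega)]
  have hsnk : (p.digits (n - k)).sum = (p.digits lo).sum + (a + A) := by
    rw [hnk, digitsum_split p lo _ r' hp1 hloLt,
      hdigit2 (a + 1) (A - 1) (by omega) (by omega)]
    omega
  have hkummer := sub_one_mul_padicValNat_choose_eq_sub_sum_digits (p := p) hkn
  rw [hsk, hsn, hsnk] at hkummer
  have : (p - 1) * padicValNat p (n.choose k) = (p - 1) * 1 := by omega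
  exact Nat.eq_of_mul_eq_mul_left (by omega) this
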